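/- Let k ≥ 1, ρ > 1, and α > 1. Let g(x) = (ρ^k/Γ(k))·x^{k−1} e^{−ρx} be the Gamma(k,ρ) density on (0,∞), and let H(x) = x + log g(x) (with H(x) = −∞ where g(x) = 0). Define β(λ₁,λ₂) = log ∫₀^∞ e^{λ₁ y + λ₂ H(y)} e^{−y} dy, β*(x₁,x₂) = sup_{(λ₁,λ₂) ∈ ℝ²} [λ₁x₁ + λ₂x₂ − β(λ₁,λ₂)], and G_α^{(2)}(θ) = θ · sup{ α x₂ − β*(x₁,x₂) : (x₁,x₂) ∈ ℝ², x₁ ≤ 1/θ } for θ > 0. Then sup_{θ ∈ (0,∞)} G_α^{(2)}(θ) ≤ ( Γ(1 + α(k−1)) / Γ(k)^α · ρ^{αk} )^{1/(1 + α(k−1))} − α(ρ−1) − 1. -/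

import Mathlib

open MeasureTheory

/-- The log-moment generating function `β(λ₁,λ₂) = log ∫₀^∞ e^{λ₁y + λ₂H(y)} e^{−y} dy`,
where `H : [0,∞) → ℝ ∪ {−∞}` is encoded through `eH = exp ∘ H : ℝ → [0,∞)` (so
`eH y = 0` exactly when `H(y) = −∞`; the `ℝ≥0∞`-power convention `0^{λ₂} = 0` for
`λ₂ > 0`, `= ∞` for `λ₂ < 0`, realizes the convention `e^{λ₂·(−∞)} = 0` for `λ₂ > 0`). -/
noncomputable def betaFn (eH : ℝ → ENNReal) (l : ℝ × ℝ) : EReal :=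
  ENNReal.log (∫⁻ y in Set.Ioi (0 : ℝ),
    ENNReal.ofReal (Real.exp (l.1 * y)) * eH y ^ l.2 * ENNReal.ofReal (Real.exp (-y)))

/-- The Legendre–Fenchel transform `β*(x) = sup_λ [⟨λ,x⟩ − β(λ)]`. -/
noncomputable def betaStar (eH : ℝ → ENNReal) (x : ℝ × ℝ) : EReal :=
  ⨆ l : ℝ × ℝ, ((l.1 * x.1 + l.2 * x.2 : ℝ) : EReal) - betaFn eH l

/-- `G_α^{(2)}(θ) = θ · sup{ αx₂ − β*(x) : x₁ ≤ 1/θ }`. -/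
noncomputable def G2 (eH : ℝ → ENNReal) (α θ : ℝ) : EReal :=
  ((θ : ℝ) : EReal) *
    ⨆ x : {p : ℝ × ℝ // p.1 ≤ θ⁻¹}, ((α * (x : ℝ × ℝ).2 : ℝ) : EReal) - betaStar eH x

section helpers
open Set Real

lemma lint_gamma {t u : ℝ} (ht : 0 ≤ t) (hu : 0 < u) :
    ∫⁻ y in Set.Ioi (0:ℝ), ENNReal.ofReal (y ^ t * Real.exp (-(u * y)))
      = ENNReal.ofReal (Real.Gamma (t+1) / u ^ (t+1)) := by
  have h1 : (0:ℝ) < t + 1 := by linarith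
  have hint : IntegrableOn (fun y : ℝ => y ^ t * Real.exp (-(u*y))) (Set.Ioi 0) := by
    have := integrableOn_rpow_mul_exp_neg_mul_rpow (by linarith : (-1:ℝ) < t) one_pos hu
    simpa [Real.rpow_one] using this
  rw [← ofReal_integral_eq_lintegral_ofReal hint ?_]
  · congr 1
    have h2 := Real.integral_rpow_mul_exp_neg_mul_Ioi h1 hu
    simp only [add_sub_cancel_right] at h2
    rw [h2, one_div, Real.inv_rpow hu.le, inv_mul_eq_div]
  · filter_upwards [ae_restrict_mem measurableSet_Ioi] with y hy
    have : (0:ℝ) < y := hy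
    positivity

lemma lint_gamma' {c t u : ℝ} (hc : 0 ≤ c) (ht : 0 ≤ t) (hu : 0 < u) :
    ∫⁻ y in Set.Ioi (0:ℝ), ENNReal.ofReal (c * (y ^ t * Real.exp (-(u * y))))
      = ENNReal.ofReal (c * (Real.Gamma (t+1) / u ^ (t+1))) := by
  simp_rw [ENNReal.ofReal_mul hc]
  rw [lintegral_const_mul' _ _ ENNReal.ofReal_ne_top, lint_gamma ht hu]

lemma lint_beta {k ρ α : ℝ} (hk : 1 ≤ k) (hρ : 1 < ρ) (hα : 1 < α) {l s : ℝ}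
    (hs : s = 1 + α * (ρ - 1) - l) (hspos : 0 < s) :
    (∫⁻ y in Set.Ioi (0:ℝ),
      ENNReal.ofReal (Real.exp (l * y)) *
        ENNReal.ofReal (ρ ^ k / Real.Gamma k * y ^ (k - 1) * Real.exp (-(ρ - 1) * y)) ^ α *
        ENNReal.ofReal (Real.exp (-y)))
    = ENNReal.ofReal ((ρ ^ k / Real.Gamma k) ^ α *
        (Real.Gamma ((k-1)*α + 1) / s ^ ((k-1)*α + 1))) := by
  have hΓ : 0 < Real.Gamma k := Real.Gamma_pos_of_pos (by linarith)
  have hc₀ : 0 < ρ ^ k / Real.Gamma k := by positivity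
  have hcongr : ∀ y ∈ Set.Ioi (0:ℝ),
      ENNReal.ofReal (Real.exp (l * y)) *
        ENNReal.ofReal (ρ ^ k / Real.Gamma k * y ^ (k - 1) * Real.exp (-(ρ - 1) * y)) ^ α *
        ENNReal.ofReal (Real.exp (-y))
      = ENNReal.ofReal ((ρ ^ k / Real.Gamma k) ^ α *
          (y ^ ((k-1)*α) * Real.exp (-(s * y)))) := by
    intro y hy
    have hy : (0:ℝ) < y := hy
    have hv : 0 < ρ ^ k / Real.Gamma k * y ^ (k - 1) * Real.exp (-(ρ - 1) * y) := by positivity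
    rw [ENNReal.ofReal_rpow_of_pos hv, ← ENNReal.ofReal_mul (by positivity),
      ← ENNReal.ofReal_mul (by positivity)]
    congr 1
    rw [Real.mul_rpow (by positivity) (Real.exp_nonneg _),
      Real.mul_rpow hc₀.le (Real.rpow_nonneg hy.le _), ← Real.rpow_mul hy.le,
      ← Real.exp_mul]
    have he : Real.exp (l * y) * Real.exp (-(ρ - 1) * y * α) * Real.exp (-y)
        = Real.exp (-(s * y)) := by
      rw [← Real.exp_add, ← Real.exp_add]; congr 1; rw [hs]; ring
    calc Real.exp (l * y) *
          ((ρ ^ k / Real.Gamma k) ^ α * y ^ ((k - 1) * α) * Real.exp (-(ρ - 1) * y * α)) *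
          Real.exp (-y)
        = (ρ ^ k / Real.Gamma k) ^ α * y ^ ((k - 1) * α) *
            (Real.exp (l * y) * Real.exp (-(ρ - 1) * y * α) * Real.exp (-y)) := by ring
      _ = _ := by rw [he]; ring
  rw [setLIntegral_congr_fun measurableSet_Ioi hcongr,
    lint_gamma' (by positivity) (by nlinarith) hspos]

lemma jensen_key {k ρ α : ℝ} (hk : 1 ≤ k) (hρ : 1 < ρ) (hα : 1 < α) :
    (1 + α * (ρ - 1)) ^ ((k-1)*α + 1)
      ≤ (ρ ^ k / Real.Gamma k) ^ α * Real.Gamma ((k-1)*α + 1) := by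
  have hΓ : 0 < Real.Gamma k := Real.Gamma_pos_of_pos (by linarith)
  have hρ0 : (0:ℝ) < ρ ^ k := Real.rpow_pos_of_pos (by linarith) _
  have hc₀ : 0 < ρ ^ k / Real.Gamma k := by positivity
  have hs₀ : (0:ℝ) < 1 + α * (ρ - 1) := by nlinarith
  set q : ℝ := Real.conjExponent α with hq
  have hpq : α.HolderConjugate q := Real.HolderConjugate.conjExponent hα
  set F : ℝ → ENNReal := fun y => ENNReal.ofReal
      (ρ ^ k / Real.Gamma k * y ^ (k - 1) * Real.exp (-(ρ - 1) * y)) *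
      ENNReal.ofReal (Real.exp (-(y/α))) with hF
  set G : ℝ → ENNReal := fun y => ENNReal.ofReal (Real.exp (-(y/q))) with hG
  have hFm : AEMeasurable F (volume.restrict (Set.Ioi (0:ℝ))) := by
    apply Measurable.aemeasurable; fun_prop
  have hGm : AEMeasurable G (volume.restrict (Set.Ioi (0:ℝ))) := by
    apply Measurable.aemeasurable; fun_prop
  have hold := ENNReal.lintegral_mul_le_Lp_mul_Lq (volume.restrict (Set.Ioi (0:ℝ))) hpq hFm hGm
  -- compute ∫ (F*G)
  have hFG : (∫⁻ y in Set.Ioi (0:ℝ), (F * G) y) = 1 := by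
    rw [setLIntegral_congr_fun measurableSet_Ioi (fun y hy => ?_)
      (g := fun y => ENNReal.ofReal ((ρ ^ k / Real.Gamma k) * (y ^ (k-1) * Real.exp (-(ρ * y)))))]
    · rw [lint_gamma' hc₀.le (by linarith) (by linarith), sub_add_cancel,
        show ρ ^ k / Real.Gamma k * (Real.Gamma k / ρ ^ k) = 1 by field_simp,
        ENNReal.ofReal_one]
    · have hy : (0:ℝ) < y := hy
      show ENNReal.ofReal _ * ENNReal.ofReal _ * ENNReal.ofReal _ = _
      rw [← ENNReal.ofReal_mul (by positivity), ← ENNReal.ofReal_mul (by positivity)]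
      congr 1
      have h1 : y/α + y/q = y := by
        rw [div_eq_mul_inv, div_eq_mul_inv, ← mul_add, hpq.inv_add_inv_eq_one, mul_one]
      have he : Real.exp (-(ρ - 1) * y) * Real.exp (-(y/α)) * Real.exp (-(y/q))
          = Real.exp (-(ρ * y)) := by
        rw [← Real.exp_add, ← Real.exp_add]; congr 1; linarith
      calc ρ ^ k / Real.Gamma k * y ^ (k - 1) * Real.exp (-(ρ - 1) * y) *
            Real.exp (-(y/α)) * Real.exp (-(y/q))
          = ρ ^ k / Real.Gamma k * y ^ (k - 1) *
            (Real.exp (-(ρ - 1) * y) * Real.exp (-(y/α)) * Real.exp (-(y/q))) := by ring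
        _ = _ := by rw [he]; ring
  -- compute ∫ F^α
  have hFa : (∫⁻ y in Set.Ioi (0:ℝ), F y ^ α)
      = ENNReal.ofReal ((ρ ^ k / Real.Gamma k) ^ α *
          (Real.Gamma ((k-1)*α + 1) / (1 + α * (ρ - 1)) ^ ((k-1)*α + 1))) := by
    rw [← lint_beta hk hρ hα (l := 0) (by ring) hs₀]
    refine setLIntegral_congr_fun measurableSet_Ioi (fun y hy => ?_)
    have hy : (0:ℝ) < y := hy
    have hv : 0 < ρ ^ k / Real.Gamma k * y ^ (k - 1) * Real.exp (-(ρ - 1) * y) := by positivity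
    show (ENNReal.ofReal _ * ENNReal.ofReal _) ^ α = _
    rw [ENNReal.mul_rpow_of_nonneg _ _ (by linarith), ENNReal.ofReal_rpow_of_pos (Real.exp_pos _),
      ← Real.exp_mul, zero_mul, Real.exp_zero]
    rw [ENNReal.ofReal_one, one_mul]
    congr 2
    rw [neg_mul, div_mul_cancel₀ y (by positivity : (α:ℝ) ≠ 0)]
  -- compute ∫ G^q
  have hGq : (∫⁻ y in Set.Ioi (0:ℝ), G y ^ q) = 1 := by
    rw [setLIntegral_congr_fun measurableSet_Ioi (fun y hy => ?_)
      (g := fun y => ENNReal.ofReal (y ^ (0:ℝ) * Real.exp (-(1 * y))))]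
    · rw [lint_gamma le_rfl one_pos, zero_add, Real.Gamma_one, Real.one_rpow, div_one,
        ENNReal.ofReal_one]
    · have hy : (0:ℝ) < y := hy
      show (ENNReal.ofReal _) ^ q = _
      simp only [Real.rpow_zero, one_mul]
      rw [ENNReal.ofReal_rpow_of_pos (Real.exp_pos _), ← Real.exp_mul]
      congr 2
      rw [neg_mul, div_mul_cancel₀ y hpq.symm.ne_zero]
  rw [hFG, hFa, hGq, ENNReal.one_rpow, mul_one] at hold
  -- conclude
  have h2 : (1:ENNReal) ≤ ENNReal.ofReal ((ρ ^ k / Real.Gamma k) ^ α *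
      (Real.Gamma ((k-1)*α + 1) / (1 + α * (ρ - 1)) ^ ((k-1)*α + 1))) := by
    calc (1:ENNReal) = (1:ENNReal) ^ α := (ENNReal.one_rpow α).symm
      _ ≤ (ENNReal.ofReal ((ρ ^ k / Real.Gamma k) ^ α *
          (Real.Gamma ((k-1)*α + 1) / (1 + α * (ρ - 1)) ^ ((k-1)*α + 1))) ^ (1/α)) ^ α :=
        ENNReal.rpow_le_rpow hold (by linarith)
      _ = _ := by
        rw [← ENNReal.rpow_mul, one_div_mul_cancel (by linarith), ENNReal.rpow_one]
  rw [ENNReal.one_le_ofReal] at h2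
  have hm : (0:ℝ) < (1 + α * (ρ - 1)) ^ ((k-1)*α + 1) := Real.rpow_pos_of_pos hs₀ _
  rw [← mul_div_assoc, le_div_iff₀ hm, one_mul] at h2
  exact h2

lemma final_ineq {θ m s₀ C : ℝ} (hθ : 0 < θ) (hm : 0 < m) (hs₀ : 0 < s₀)
    (hCpos : 0 < C) (hC : s₀ ^ m ≤ C) :
    θ * Real.log (C / (max (θ*m) s₀) ^ m) - (s₀ - max (θ*m) s₀) ≤ C ^ (1/m) - s₀ := by
  set c : ℝ := C ^ (1/m) with hc
  have hcpos : 0 < c := Real.rpow_pos_of_pos hCpos _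
  set s : ℝ := max (θ*m) s₀ with hsdef
  have hs : 0 < s := lt_of_lt_of_le hs₀ (le_max_right _ _)
  have hts : θ * m ≤ s := le_max_left _ _
  have hlog : Real.log (C / s ^ m) = m * Real.log (c / s) := by
    rw [Real.log_div hCpos.ne' (Real.rpow_pos_of_pos hs _).ne',
      Real.log_div hcpos.ne' hs.ne', Real.log_rpow hs, hc, Real.log_rpow hCpos]
    field_simp
  rw [hlog]
  have hcs : c ≥ s₀ := by
    calc c = C ^ (1/m) := rfl
      _ ≥ (s₀ ^ m) ^ (1/m) := Real.rpow_le_rpow (by positivity) hC (by positivity)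
      _ = s₀ := by
        rw [← Real.rpow_mul hs₀.le, mul_one_div_cancel hm.ne', Real.rpow_one]
  -- goal: θ * (m * log (c/s)) - (s₀ - s) ≤ c - s₀, i.e. θ*m*log(c/s) + s ≤ c
  have key : θ * m * Real.log (c / s) + s ≤ c := by
    rcases le_or_gt s₀ (θ * m) with h | h
    · have hseq : s = θ * m := max_eq_left h
      have := Real.log_le_sub_one_of_pos (show 0 < c / s from by positivity)
      calc θ * m * Real.log (c / s) + s = s * Real.log (c / s) + s := by rw [hseq]
        _ ≤ s * (c / s - 1) + s := by nlinarith
        _ = c := by field_simp; ring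
    · have hseq : s = s₀ := max_eq_right h.le
      have hlognn : 0 ≤ Real.log (c / s) := by
        apply Real.log_nonneg
        rw [le_div_iff₀ hs, one_mul, hseq]
        exact hcs
      have := Real.log_le_sub_one_of_pos (show 0 < c / s from by positivity)
      calc θ * m * Real.log (c / s) + s ≤ s * Real.log (c / s) + s := by nlinarith
        _ ≤ s * (c / s - 1) + s := by nlinarith
        _ = c := by field_simp; ring
  linarith

end helpers

/-- For the Gamma(`k,ρ`) density `g(x) = ρ^k/Γ(k)·x^{k−1}e^{−ρx}` with `k ≥ 1`,
`ρ > 1` (so `eH x = e^{H(x)} = g(x)e^x`), one has for every `α > 1`: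
`sup_{θ > 0} G_α^{(2)}(θ) ≤ (Γ(1+α(k−1))/Γ(k)^α · ρ^{αk})^{1/(1+α(k−1))} − α(ρ−1) − 1`. -/
theorem iSup_G2_gamma_le (k ρ α : ℝ) (hk : 1 ≤ k) (hρ : 1 < ρ) (hα : 1 < α) :
    (⨆ θ ∈ Set.Ioi (0 : ℝ),
        G2 (fun x => ENNReal.ofReal
          (ρ ^ k / Real.Gamma k * x ^ (k - 1) * Real.exp (-(ρ - 1) * x))) α θ)
      ≤ (((Real.Gamma (1 + α * (k - 1)) / Real.Gamma k ^ α * ρ ^ (α * k))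
            ^ (1 / (1 + α * (k - 1))) - α * (ρ - 1) - 1 : ℝ) : EReal) := by
  have hΓ : 0 < Real.Gamma k := Real.Gamma_pos_of_pos (by linarith)
  have hρ0 : (0:ℝ) < ρ ^ k := Real.rpow_pos_of_pos (by linarith) _
  set eHf : ℝ → ENNReal := fun x => ENNReal.ofReal
      (ρ ^ k / Real.Gamma k * x ^ (k - 1) * Real.exp (-(ρ - 1) * x)) with heHf
  set m : ℝ := (k - 1) * α + 1 with hm_def
  set s₀ : ℝ := 1 + α * (ρ - 1) with hs₀_def
  have hm : 0 < m := by nlinarith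
  have hs₀pos : 0 < s₀ := by nlinarith
  set C : ℝ := (ρ ^ k / Real.Gamma k) ^ α * Real.Gamma m with hC_def
  have hCpos : 0 < C := by
    have := Real.Gamma_pos_of_pos hm
    positivity
  have hC : s₀ ^ m ≤ C := jensen_key hk hρ hα
  have hRHS : (Real.Gamma (1 + α * (k - 1)) / Real.Gamma k ^ α * ρ ^ (α * k))
        ^ (1 / (1 + α * (k - 1))) - α * (ρ - 1) - 1 = C ^ (1/m) - s₀ := by
    have hCeq : Real.Gamma (1 + α * (k - 1)) / Real.Gamma k ^ α * ρ ^ (α * k) = C := by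
      rw [hC_def, Real.div_rpow hρ0.le hΓ.le,
        show (1 : ℝ) + α * (k - 1) = (k - 1) * α + 1 by ring,
        show (α : ℝ) * k = k * α by ring, Real.rpow_mul (by linarith : (0:ℝ) ≤ ρ)]
      ring
    rw [hCeq, show (1 : ℝ) + α * (k - 1) = m by rw [hm_def]; ring, hs₀_def]
    ring
  rw [hRHS]
  refine iSup₂_le fun θ hθ => ?_
  have hθ : (0:ℝ) < θ := hθ
  set s : ℝ := max (θ * m) s₀ with hs_def
  set l : ℝ := s₀ - s with hl_def
  have hl : l ≤ 0 := by
    have := le_max_right (θ * m) s₀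
    rw [hl_def]; linarith
  have hspos : (0:ℝ) < s := lt_of_lt_of_le hs₀pos (le_max_right _ _)
  have hseq : s = 1 + α * (ρ - 1) - l := by rw [hl_def, hs₀_def]; ring
  set L : ℝ := Real.log (C / s ^ m) with hL_def
  have hbeta : betaFn eHf (l, α) = ((L : ℝ) : EReal) := by
    have h0 : betaFn eHf (l, α) = ENNReal.log (∫⁻ y in Set.Ioi (0:ℝ),
        ENNReal.ofReal (Real.exp (l * y)) *
          ENNReal.ofReal (ρ ^ k / Real.Gamma k * y ^ (k - 1) * Real.exp (-(ρ - 1) * y)) ^ α *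
          ENNReal.ofReal (Real.exp (-y))) := rfl
    rw [h0, lint_beta hk hρ hα hseq hspos]
    rw [ENNReal.log_ofReal_of_pos (by
      have := Real.Gamma_pos_of_pos (show (0:ℝ) < (k-1)*α + 1 by nlinarith)
      have h1 : (0:ℝ) < ρ ^ k / Real.Gamma k := by positivity
      positivity)]
    rw [hL_def, hC_def, hm_def, mul_div_assoc]
  have hxle : ∀ x : {p : ℝ × ℝ // p.1 ≤ θ⁻¹},
      ((α * (x : ℝ × ℝ).2 : ℝ) : EReal) - betaStar eHf x
        ≤ ((L - l * θ⁻¹ : ℝ) : EReal) := by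
    intro x
    have h1 : ((l * (x : ℝ × ℝ).1 + α * (x : ℝ × ℝ).2 : ℝ) : EReal) - betaFn eHf (l, α)
        ≤ betaStar eHf x := le_iSup
          (fun lam : ℝ × ℝ =>
            ((lam.1 * (x : ℝ × ℝ).1 + lam.2 * (x : ℝ × ℝ).2 : ℝ) : EReal) - betaFn eHf lam)
          (l, α)
    calc ((α * (x : ℝ × ℝ).2 : ℝ) : EReal) - betaStar eHf x
        ≤ ((α * (x : ℝ × ℝ).2 : ℝ) : EReal) -
            (((l * (x : ℝ × ℝ).1 + α * (x : ℝ × ℝ).2 : ℝ) : EReal) - betaFn eHf (l, α)) :=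
          EReal.sub_le_sub le_rfl h1
      _ = ((α * (x : ℝ × ℝ).2 - (l * (x : ℝ × ℝ).1 + α * (x : ℝ × ℝ).2 - L) : ℝ) : EReal) := by
          rw [hbeta, ← EReal.coe_sub, ← EReal.coe_sub]
      _ ≤ ((L - l * θ⁻¹ : ℝ) : EReal) := by
          apply EReal.coe_le_coe_iff.2
          have h2 : l * θ⁻¹ ≤ l * (x : ℝ × ℝ).1 := mul_le_mul_of_nonpos_left x.2 hl
          linarith
  have hG2 : G2 eHf α θ ≤ ((θ * L - l : ℝ) : EReal) := by
    have h3 : G2 eHf α θ ≤ ((θ : ℝ) : EReal) * ((L - l * θ⁻¹ : ℝ) : EReal) := by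
      rw [G2]
      exact mul_le_mul_of_nonneg_left (iSup_le hxle) (by exact_mod_cast hθ.le)
    calc G2 eHf α θ ≤ ((θ : ℝ) : EReal) * ((L - l * θ⁻¹ : ℝ) : EReal) := h3
      _ = ((θ * L - l : ℝ) : EReal) := by
          rw [← EReal.coe_mul]
          congr 1
          field_simp
  refine le_trans hG2 (EReal.coe_le_coe_iff.2 ?_)
  have := final_ineq hθ hm hs₀pos hCpos hC
  rw [hL_def]
  convert this using 2 <;> rw [hs_def, hl_def]
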